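/- Let P_{XY} be a joint distribution on a finite set X × Y, φ: X^n → M₁ a map, ψ̄: M₁ × M₂ → Y^n a map, and φ₂: Y^n → M₂ arbitrary. For any η > 0, P_{Y^n φ(X^n)}-probability of the event {Ŷ^n = Y^n} restricted to pairs with P_{Y^n|φ(X^n)}(y^n|u₁) ≤ e^{−η}/|M₂| is at most e^{−η}, where Ŷ^n = ψ̄(φ(X^n), φ₂(Y^n)). Consequently Pr{Ŷ^n = Y^n} ≤ P_{Y^n φ(X^n)}(𝒜ᶜ) + e^{−η} where 𝒜 = {(y^n,u₁): P_{Y^n|φ(X^n)}(y^n|u₁) ≤ e^{−η}/|M₂|}. -/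

import Mathlib

open scoped Classical

/-- WAK-to-hypothesis-testing conversion bound: for `(X^n,Y^n) ∼ P_{XY}^{⊗n}`,
compressors `φ : X^n → M₁`, `φ₂ : Y^n → M₂`, decoder `ψ̄ : M₁ × M₂ → Y^n`,
`Ŷ^n = ψ̄(φ(X^n), φ₂(Y^n))`, and any `η > 0`: the probability of `{Ŷ^n = Y^n}` on pairs
with `P_{Y^n|φ(X^n)}(y^n|u₁) ≤ e^{−η}/|M₂|` is at most `e^{−η}`, hence
`Pr{Ŷ^n = Y^n} ≤ P_{Y^n φ(X^n)}(𝒜ᶜ) + e^{−η}` with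
`𝒜 = {(y^n,u₁) : P_{Y^n|φ(X^n)}(y^n|u₁) ≤ e^{−η}/|M₂|}`. -/
theorem stmt15 {X Y M₁ M₂ : Type*} [Fintype X] [Fintype Y] [Fintype M₁] [Fintype M₂]
    (n : ℕ) (PXY : X → Y → ℝ) (h0 : ∀ x y, 0 ≤ PXY x y) (h1 : ∑ x, ∑ y, PXY x y = 1)
    (φ : (Fin n → X) → M₁) (φ₂ : (Fin n → Y) → M₂) (ψ : M₁ → M₂ → (Fin n → Y))
    (η : ℝ) (hη : 0 < η) :
    (∑ m₁ : M₁, ∑ y : Fin n → Y,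
        if ψ m₁ (φ₂ y) = y ∧
            (∑ x : Fin n → X, if φ x = m₁ then ∏ l, PXY (x l) (y l) else 0) /
              (∑ y' : Fin n → Y, ∑ x : Fin n → X, if φ x = m₁ then ∏ l, PXY (x l) (y' l) else 0)
              ≤ Real.exp (-η) / Fintype.card M₂
        then ∑ x : Fin n → X, if φ x = m₁ then ∏ l, PXY (x l) (y l) else 0 else 0)
      ≤ Real.exp (-η) ∧
    (∑ x : Fin n → X, ∑ y : Fin n → Y,
        if ψ (φ x) (φ₂ y) = y then ∏ l, PXY (x l) (y l) else 0)
      ≤ (∑ m₁ : M₁, ∑ y : Fin n → Y,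
          if ¬ ((∑ x : Fin n → X, if φ x = m₁ then ∏ l, PXY (x l) (y l) else 0) /
              (∑ y' : Fin n → Y, ∑ x : Fin n → X, if φ x = m₁ then ∏ l, PXY (x l) (y' l) else 0)
              ≤ Real.exp (-η) / Fintype.card M₂)
          then ∑ x : Fin n → X, if φ x = m₁ then ∏ l, PXY (x l) (y l) else 0 else 0)
        + Real.exp (-η) := by
  set P : M₁ → (Fin n → Y) → ℝ := fun m₁ y =>
    ∑ x : Fin n → X, if φ x = m₁ then ∏ l, PXY (x l) (y l) else 0 with hPdef
  set Q : M₁ → ℝ := fun m₁ => ∑ y' : Fin n → Y, P m₁ y' with hQdef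
  have hPnn : ∀ m₁ y, 0 ≤ P m₁ y := fun m₁ y =>
    Finset.sum_nonneg fun x _ => by
      split
      · exact Finset.prod_nonneg fun l _ => h0 _ _
      · exact le_refl 0
  have hQnn : ∀ m₁, 0 ≤ Q m₁ := fun m₁ => Finset.sum_nonneg fun y _ => hPnn m₁ y
  have hPleQ : ∀ m₁ y, P m₁ y ≤ Q m₁ := fun m₁ y =>
    Finset.single_le_sum (fun y' _ => hPnn m₁ y') (Finset.mem_univ y)
  have hc : (0:ℝ) ≤ Real.exp (-η) / Fintype.card M₂ :=
    div_nonneg (Real.exp_nonneg _) (Nat.cast_nonneg _)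
  -- key pointwise bound from the condition
  have hkey : ∀ m₁ y, P m₁ y / Q m₁ ≤ Real.exp (-η) / Fintype.card M₂ →
      P m₁ y ≤ (Real.exp (-η) / Fintype.card M₂) * Q m₁ := by
    intro m₁ y h
    rcases eq_or_lt_of_le (hQnn m₁) with hQ0 | hQpos
    · have : P m₁ y = 0 := le_antisymm (hQ0 ▸ hPleQ m₁ y) (hPnn m₁ y)
      rw [this, ← hQ0, mul_zero]
    · exact (div_le_iff₀ hQpos).mp h
  -- total mass is 1
  have htot : ∑ m₁, Q m₁ = 1 := by
    have h2 : ∑ m₁ : M₁, Q m₁ =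
        ∑ x : Fin n → X, ∑ y : Fin n → Y, ∏ l, PXY (x l) (y l) := by
      calc ∑ m₁ : M₁, Q m₁ = ∑ m₁ : M₁, ∑ y : Fin n → Y, P m₁ y := rfl
        _ = ∑ y : Fin n → Y, ∑ m₁ : M₁, P m₁ y := Finset.sum_comm
        _ = ∑ y : Fin n → Y, ∑ m₁ : M₁, ∑ x : Fin n → X,
              (if φ x = m₁ then ∏ l, PXY (x l) (y l) else 0) := rfl
        _ = ∑ y : Fin n → Y, ∑ x : Fin n → X, ∑ m₁ : M₁,
              (if φ x = m₁ then ∏ l, PXY (x l) (y l) else 0) :=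
            Finset.sum_congr rfl fun y _ => Finset.sum_comm
        _ = ∑ y : Fin n → Y, ∑ x : Fin n → X, ∏ l, PXY (x l) (y l) := by simp
        _ = ∑ x : Fin n → X, ∑ y : Fin n → Y, ∏ l, PXY (x l) (y l) := Finset.sum_comm
    have h3 : ∑ x : Fin n → X, ∑ y : Fin n → Y, ∏ l, PXY (x l) (y l) =
        ∑ z : Fin n → X × Y, ∏ l, PXY (z l).1 (z l).2 := by
      rw [← Fintype.sum_prod_type' (f := fun (x : Fin n → X) (y : Fin n → Y) =>
        ∏ l, PXY (x l) (y l))]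
      exact (Fintype.sum_equiv (Equiv.arrowProdEquivProdArrow (Fin n) (fun _ => X) (fun _ => Y)) _ _
        (fun z => by simp [Equiv.arrowProdEquivProdArrow])).symm
    rw [h2, h3, ← Fintype.sum_pow (fun p : X × Y => PXY p.1 p.2) n,
      Fintype.sum_prod_type, h1, one_pow]
  -- first claim
  have claim1 : (∑ m₁ : M₁, ∑ y : Fin n → Y,
      if ψ m₁ (φ₂ y) = y ∧ P m₁ y / Q m₁ ≤ Real.exp (-η) / Fintype.card M₂
      then P m₁ y else 0) ≤ Real.exp (-η) := by
    have hm : ∀ m₁ : M₁, (∑ y : Fin n → Y,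
        if ψ m₁ (φ₂ y) = y ∧ P m₁ y / Q m₁ ≤ Real.exp (-η) / Fintype.card M₂
        then P m₁ y else 0) ≤ Real.exp (-η) * Q m₁ := by
      intro m₁
      rw [← Finset.sum_filter]
      set S := Finset.univ.filter (fun y : Fin n → Y =>
        ψ m₁ (φ₂ y) = y ∧ P m₁ y / Q m₁ ≤ Real.exp (-η) / Fintype.card M₂) with hS
      have hcard : S.card ≤ Fintype.card M₂ := by
        have hinj : Set.InjOn φ₂ S := by
          intro a ha b hb hab
          have ha' := (Finset.mem_filter.mp ha).2.1
          have hb' := (Finset.mem_filter.mp hb).2.1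
          rw [← ha', ← hb', hab]
        calc S.card = (S.image φ₂).card := (Finset.card_image_of_injOn hinj).symm
          _ ≤ Fintype.card M₂ := by simpa using Finset.card_le_univ (S.image φ₂)
      calc ∑ y ∈ S, P m₁ y
          ≤ ∑ _y ∈ S, (Real.exp (-η) / Fintype.card M₂) * Q m₁ := by
            refine Finset.sum_le_sum fun y hy => ?_
            exact hkey m₁ y (Finset.mem_filter.mp hy).2.2
        _ = S.card * ((Real.exp (-η) / Fintype.card M₂) * Q m₁) := by
            rw [Finset.sum_const, nsmul_eq_mul]
        _ ≤ (Fintype.card M₂ : ℝ) * ((Real.exp (-η) / Fintype.card M₂) * Q m₁) := by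
            refine mul_le_mul_of_nonneg_right ?_ (mul_nonneg hc (hQnn m₁))
            exact_mod_cast hcard
        _ ≤ Real.exp (-η) * Q m₁ := by
            rcases Nat.eq_zero_or_pos (Fintype.card M₂) with h | h
            · simp only [h, Nat.cast_zero, zero_mul]
              exact mul_nonneg (Real.exp_nonneg _) (hQnn m₁)
            · have hne : (Fintype.card M₂ : ℝ) ≠ 0 := by positivity
              rw [div_mul_eq_mul_div, mul_comm, mul_div_assoc, mul_assoc,
                div_mul_cancel₀ _ hne]
    calc (∑ m₁ : M₁, ∑ y : Fin n → Y,
        if ψ m₁ (φ₂ y) = y ∧ P m₁ y / Q m₁ ≤ Real.exp (-η) / Fintype.card M₂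
        then P m₁ y else 0)
        ≤ ∑ m₁ : M₁, Real.exp (-η) * Q m₁ :=
          Finset.sum_le_sum fun m₁ _ => hm m₁
      _ = Real.exp (-η) := by rw [← Finset.mul_sum, htot, mul_one]
  refine ⟨claim1, ?_⟩
  -- second claim
  have hre : (∑ x : Fin n → X, ∑ y : Fin n → Y,
      if ψ (φ x) (φ₂ y) = y then ∏ l, PXY (x l) (y l) else 0)
      = ∑ m₁ : M₁, ∑ y : Fin n → Y, if ψ m₁ (φ₂ y) = y then P m₁ y else 0 := by
    rw [Finset.sum_comm]
    conv_rhs => rw [Finset.sum_comm]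
    refine Finset.sum_congr rfl fun y _ => ?_
    have hstep : ∀ m₁ : M₁, (if ψ m₁ (φ₂ y) = y then P m₁ y else 0)
        = ∑ x : Fin n → X,
          (if ψ m₁ (φ₂ y) = y ∧ φ x = m₁ then ∏ l, PXY (x l) (y l) else 0) := by
      intro m₁
      by_cases h : ψ m₁ (φ₂ y) = y <;> simp [h, hPdef]
    rw [Finset.sum_congr rfl fun m₁ _ => hstep m₁, Finset.sum_comm]
    refine Finset.sum_congr rfl fun x _ => ?_
    rw [Finset.sum_eq_single (φ x)]
    · simp
    · intro b _ hb
      exact if_neg (by rintro ⟨-, h⟩; exact hb h.symm)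
    · intro h; exact absurd (Finset.mem_univ _) h
  rw [hre]
  have hsplit : ∀ m₁ y, (if ψ m₁ (φ₂ y) = y then P m₁ y else 0) ≤
      (if ψ m₁ (φ₂ y) = y ∧ P m₁ y / Q m₁ ≤ Real.exp (-η) / Fintype.card M₂
        then P m₁ y else 0) +
      (if ¬ (P m₁ y / Q m₁ ≤ Real.exp (-η) / Fintype.card M₂) then P m₁ y else 0) := by
    intro m₁ y
    by_cases h₁ : ψ m₁ (φ₂ y) = y <;>
      by_cases h₂ : P m₁ y / Q m₁ ≤ Real.exp (-η) / Fintype.card M₂ <;>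
      simp [h₁, h₂, hPnn m₁ y]
  calc (∑ m₁ : M₁, ∑ y : Fin n → Y, if ψ m₁ (φ₂ y) = y then P m₁ y else 0)
      ≤ ∑ m₁ : M₁, ∑ y : Fin n → Y,
        ((if ψ m₁ (φ₂ y) = y ∧ P m₁ y / Q m₁ ≤ Real.exp (-η) / Fintype.card M₂
          then P m₁ y else 0) +
        (if ¬ (P m₁ y / Q m₁ ≤ Real.exp (-η) / Fintype.card M₂) then P m₁ y else 0)) :=
        Finset.sum_le_sum fun m₁ _ => Finset.sum_le_sum fun y _ => hsplit m₁ y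
    _ = (∑ m₁ : M₁, ∑ y : Fin n → Y,
          if ψ m₁ (φ₂ y) = y ∧ P m₁ y / Q m₁ ≤ Real.exp (-η) / Fintype.card M₂
          then P m₁ y else 0) +
        (∑ m₁ : M₁, ∑ y : Fin n → Y,
          if ¬ (P m₁ y / Q m₁ ≤ Real.exp (-η) / Fintype.card M₂) then P m₁ y else 0) := by
        rw [← Finset.sum_add_distrib]
        exact Finset.sum_congr rfl fun m₁ _ => Finset.sum_add_distrib
    _ ≤ (∑ m₁ : M₁, ∑ y : Fin n → Y,
          if ¬ (P m₁ y / Q m₁ ≤ Real.exp (-η) / Fintype.card M₂) then P m₁ y else 0)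
        + Real.exp (-η) := by
        rw [add_comm]
        exact add_le_add_right claim1 _
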